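/- There exists a sequence X₁ ⊆ X₂ ⊆ X₃ ⊆ ⋯ of finite subsets of ℙ¹(ℚ) such that: (1) each Xᵢ is rigid, i.e. every locally injective simplicial map Xᵢ → ℙ¹(ℚ) (with respect to the Farey graph F) coincides with the action of some element of GL(2,ℤ); (2) for each i, the only elements of GL(2,ℤ) fixing every point of Xᵢ are I and −I; and (3) ⋃_{i ≥ 1} Xᵢ = ℙ¹(ℚ). (This is the paper's main theorem, Theorem 1.1 — an exhaustion of the curve complex by finite rigid sets — in the case of the surfaces S₁,₁ and S₀,₄, whose curve complex is the Farey complex.) -/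

import Mathlib

/-- The projective line over `ℚ`. -/
abbrev P1Q := Projectivization ℚ (Fin 2 → ℚ)

/-- The point of `ℙ¹(ℚ)` with homogeneous integer coordinates `[a : b]`
(a junk value is returned when `a = b = 0`, which never occurs for primitive vectors). -/
def fareyMk (a b : ℤ) : P1Q :=
  if h : a = 0 ∧ b = 0 then
    Projectivization.mk ℚ ![1, 0] (by
      intro hv
      have h0 := congrFun hv 0
      simp at h0)
  else
    Projectivization.mk ℚ ![(a : ℚ), (b : ℚ)] (by
      intro hv
      have h0 : (a : ℚ) = 0 := by simpa using congrFun hv 0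
      have h1 : (b : ℚ) = 0 := by simpa using congrFun hv 1
      exact h ⟨by exact_mod_cast h0, by exact_mod_cast h1⟩)

/-- Two points of `ℙ¹(ℚ)` are related if they are represented by primitive integer
vectors `(a,b)` and `(c,d)` with `|ad - bc| = 1`. -/
def fareyRel (x y : P1Q) : Prop :=
  ∃ a b c d : ℤ, Int.gcd a b = 1 ∧ Int.gcd c d = 1 ∧ |a * d - b * c| = 1 ∧
    x = fareyMk a b ∧ y = fareyMk c d

/-- The Farey graph on `ℙ¹(ℚ)`. -/
def fareyGraph : SimpleGraph P1Q := SimpleGraph.fromRel fareyRel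

/-- The rational matrix associated to an element of `GL(2,ℤ)`. -/
def matQ (g : GL (Fin 2) ℤ) : Matrix (Fin 2) (Fin 2) ℚ :=
  (g : Matrix (Fin 2) (Fin 2) ℤ).map ((↑) : ℤ → ℚ)

lemma matQ_mul (g h : GL (Fin 2) ℤ) : matQ (g * h) = matQ g * matQ h := by
  simpa [matQ] using
    (RingHom.mapMatrix (Int.castRingHom ℚ)).map_mul (g : Matrix (Fin 2) (Fin 2) ℤ) h

lemma matQ_one : matQ 1 = (1 : Matrix (Fin 2) (Fin 2) ℚ) := by
  simpa [matQ] using (RingHom.mapMatrix (Int.castRingHom ℚ)).map_one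

lemma mulVecLin_matQ_injective (g : GL (Fin 2) ℤ) :
    Function.Injective ((matQ g).mulVecLin) := by
  have key : ∀ v : Fin 2 → ℚ, (matQ g⁻¹).mulVecLin ((matQ g).mulVecLin v) = v := by
    intro v
    rw [Matrix.mulVecLin_apply, Matrix.mulVecLin_apply, Matrix.mulVec_mulVec,
      ← matQ_mul, inv_mul_cancel, matQ_one, Matrix.one_mulVec]
  exact Function.LeftInverse.injective key

/-- The action of `GL(2,ℤ)` on `ℙ¹(ℚ)` by linear action on representative vectors. -/
def fareyAct (g : GL (Fin 2) ℤ) (x : P1Q) : P1Q :=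
  Projectivization.map ((matQ g).mulVecLin) (mulVecLin_matQ_injective g) x

/-- A map `φ` is simplicial on `Y ⊆ ℙ¹(ℚ)` with respect to the Farey graph. -/
def FareySimplicial (Y : Set P1Q) (φ : P1Q → P1Q) : Prop :=
  ∀ y ∈ Y, ∀ z ∈ Y, fareyGraph.Adj y z → fareyGraph.Adj (φ y) (φ z)

/-- The closed star of `y` in `Y`: the set `{y} ∪ {z ∈ Y : z adjacent to y}`. -/
def fareyClosedStar (Y : Set P1Q) (y : P1Q) : Set P1Q :=
  {z ∈ Y | z = y ∨ fareyGraph.Adj y z}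

/-- A map `φ` is locally injective on `Y ⊆ ℙ¹(ℚ)` with respect to the Farey graph. -/
def FareyLocallyInjective (Y : Set P1Q) (φ : P1Q → P1Q) : Prop :=
  ∀ y ∈ Y, Set.InjOn φ (fareyClosedStar Y y)

namespace Farey

/-- Integer vectors as pairs. -/
abbrev V2 := ℤ × ℤ

def det2 (u v : V2) : ℤ := u.1 * v.2 - u.2 * v.1

def Prim (u : V2) : Prop := Int.gcd u.1 u.2 = 1

def pmk (u : V2) : P1Q := fareyMk u.1 u.2

lemma Prim.ne_zero {u : V2} (h : Prim u) : u ≠ 0 := by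
  rintro rfl
  simp [Prim] at h

lemma vecQ_ne_zero {a b : ℤ} (h : ¬(a = 0 ∧ b = 0)) : (![(a:ℚ), (b:ℚ)] : Fin 2 → ℚ) ≠ 0 := by
  intro hv
  have h0 : (a : ℚ) = 0 := by simpa using congrFun hv 0
  have h1 : (b : ℚ) = 0 := by simpa using congrFun hv 1
  exact h ⟨by exact_mod_cast h0, by exact_mod_cast h1⟩

lemma fareyMk_of_ne {a b : ℤ} (h : ¬(a = 0 ∧ b = 0)) :
    fareyMk a b = Projectivization.mk ℚ ![(a:ℚ), (b:ℚ)] (vecQ_ne_zero h) := by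
  simp [fareyMk, h]

lemma pair_ne_iff {u : V2} : u ≠ 0 ↔ ¬(u.1 = 0 ∧ u.2 = 0) := by
  constructor
  · intro h hc; exact h (Prod.ext hc.1 hc.2)
  · intro h hc; subst hc; exact h ⟨rfl, rfl⟩

lemma pmk_def {u : V2} (h : u ≠ 0) :
    pmk u = Projectivization.mk ℚ ![(u.1:ℚ), (u.2:ℚ)] (vecQ_ne_zero (pair_ne_iff.mp h)) :=
  fareyMk_of_ne (pair_ne_iff.mp h)

lemma pmk_eq_pmk_of_smul {u v : V2} (hu : u ≠ 0) (hv : v ≠ 0) (t : ℚ) (ht : t ≠ 0)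
    (h1 : t * (v.1 : ℚ) = u.1) (h2 : t * (v.2 : ℚ) = u.2) : pmk u = pmk v := by
  rw [pmk_def hu, pmk_def hv, Projectivization.mk_eq_mk_iff]
  refine ⟨Units.mk0 t ht, ?_⟩
  funext i
  fin_cases i <;> simp [h1, h2]

lemma exists_smul_of_pmk_eq {u v : V2} (hu : u ≠ 0) (hv : v ≠ 0) (h : pmk u = pmk v) :
    ∃ t : ℚ, t ≠ 0 ∧ t * (v.1 : ℚ) = u.1 ∧ t * (v.2 : ℚ) = u.2 := by
  rw [pmk_def hu, pmk_def hv, Projectivization.mk_eq_mk_iff] at h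
  obtain ⟨a, ha⟩ := h
  refine ⟨(a : ℚ), a.ne_zero, ?_, ?_⟩
  · simpa [Units.smul_def] using congrFun ha 0
  · simpa [Units.smul_def] using congrFun ha 1

lemma det2_eq_zero_of_pmk_eq {u v : V2} (hu : u ≠ 0) (hv : v ≠ 0) (h : pmk u = pmk v) :
    det2 u v = 0 := by
  obtain ⟨t, _, h1, h2⟩ := exists_smul_of_pmk_eq hu hv h
  have : ((det2 u v : ℤ) : ℚ) = 0 := by
    push_cast [det2]
    rw [← h1, ← h2]; ring
  exact_mod_cast this

lemma pmk_eq_of_det2_eq_zero {u v : V2} (hu : u ≠ 0) (hv : v ≠ 0) (h : det2 u v = 0) :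
    pmk u = pmk v := by
  have hq : (u.1 : ℚ) * v.2 = u.2 * v.1 := by
    have : ((u.1 * v.2 - u.2 * v.1 : ℤ) : ℚ) = 0 := by rw [← det2]; exact_mod_cast h
    push_cast at this; linarith
  rcases eq_or_ne v.1 0 with hv1 | hv1
  · have hv2 : v.2 ≠ 0 := by
      intro hv2; exact hv (Prod.ext hv1 hv2)
    have hu1 : u.1 = 0 := by
      have : (u.1 : ℚ) * v.2 = 0 := by rw [hq, hv1]; push_cast; ring
      have := mul_eq_zero.mp this
      rcases this with h' | h'
      · exact_mod_cast h'
      · exact absurd (by exact_mod_cast h' : v.2 = 0) hv2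
    have hu2 : u.2 ≠ 0 := by
      intro hu2; exact hu (Prod.ext hu1 hu2)
    refine pmk_eq_pmk_of_smul hu hv ((u.2 : ℚ) / v.2) ?_ ?_ ?_
    · exact div_ne_zero (by exact_mod_cast hu2) (by exact_mod_cast hv2)
    · rw [hv1, hu1]; push_cast; ring
    · field_simp
  · refine pmk_eq_pmk_of_smul hu hv ((u.1 : ℚ) / v.1) ?_ ?_ ?_
    · have hu1 : u.1 ≠ 0 := by
        intro hu1
        have : (u.2 : ℚ) * v.1 = 0 := by rw [← hq, hu1]; push_cast; ring
        rcases mul_eq_zero.mp this with h' | h'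
        · exact hu (Prod.ext hu1 (by exact_mod_cast h'))
        · exact hv1 (by exact_mod_cast h')
      exact div_ne_zero (by exact_mod_cast hu1) (by exact_mod_cast hv1)
    · field_simp
    · field_simp
      linear_combination hq

lemma pmk_neg (u : V2) : pmk (-u) = pmk u := by
  rcases eq_or_ne u 0 with rfl | hu
  · norm_num
  · refine pmk_eq_of_det2_eq_zero (by simpa using hu) hu ?_
    simp [det2]; ring

lemma eq_or_eq_neg_of_pmk_eq {u v : V2} (hu : Prim u) (hv : Prim v) (h : pmk u = pmk v) :
    u = v ∨ u = -v := by
  have hc : u.1 * v.2 = u.2 * v.1 := by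
    have := det2_eq_zero_of_pmk_eq hu.ne_zero hv.ne_zero h
    unfold det2 at this; omega
  have h11 : u.1 ∣ v.1 := by
    have hd : u.1 ∣ u.2 * v.1 := ⟨v.2, by linarith [hc]⟩
    exact (Int.dvd_of_dvd_mul_right_of_gcd_one hd hu)
  have h22 : v.1 ∣ u.1 := by
    have hd : v.1 ∣ v.2 * u.1 := ⟨u.2, by linarith [hc]⟩
    exact (Int.dvd_of_dvd_mul_right_of_gcd_one hd hv)
  have hassoc : u.1 = v.1 ∨ u.1 = -v.1 := by
    have := associated_of_dvd_dvd h11 h22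
    rwa [Int.associated_iff] at this
  rcases eq_or_ne v.1 0 with hv1 | hv1
  · have hu1 : u.1 = 0 := by rcases hassoc with h' | h' <;> omega
    have hv2 : v.2 = 1 ∨ v.2 = -1 := by
      have : Int.gcd v.1 v.2 = 1 := hv
      rw [hv1] at this; simp [Int.gcd] at this; omega
    have hu2 : u.2 = 1 ∨ u.2 = -1 := by
      have : Int.gcd u.1 u.2 = 1 := hu
      rw [hu1] at this; simp [Int.gcd] at this; omega
    rcases hv2 with h2 | h2 <;> rcases hu2 with h3 | h3
    · left; exact Prod.ext (by omega) (by omega)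
    · right; exact Prod.ext (by simp; omega) (by simp; omega)
    · right; exact Prod.ext (by simp; omega) (by simp; omega)
    · left; exact Prod.ext (by omega) (by omega)
  · rcases hassoc with h' | h'
    · left
      refine Prod.ext h' ?_
      have : u.2 * v.1 = v.2 * v.1 := by rw [← hc, h']; ring
      exact mul_right_cancel₀ hv1 this
    · right
      refine Prod.ext (by simp [h']) ?_
      have : u.2 * v.1 = -v.2 * v.1 := by rw [← hc, h']; ring
      have := mul_right_cancel₀ hv1 this
      simp only [Prod.fst_neg, Prod.snd_neg]
      omega

end Farey
namespace Farey

lemma Prim.neg {u : V2} (h : Prim u) : Prim (-u) := by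
  unfold Prim at *
  simpa using h

lemma det2_neg_left (u v : V2) : det2 (-u) v = -det2 u v := by
  simp [det2]; ring

lemma det2_neg_right (u v : V2) : det2 u (-v) = -det2 u v := by
  simp [det2]; ring

lemma pmk_ne_of_det2 {u v : V2} (hu : u ≠ 0) (hv : v ≠ 0) (hd : |det2 u v| = 1) :
    pmk u ≠ pmk v := by
  intro h
  have := det2_eq_zero_of_pmk_eq hu hv h
  rw [this] at hd
  simp at hd

lemma adj_of_det2 {u v : V2} (hu : Prim u) (hv : Prim v) (hd : |det2 u v| = 1) :
    fareyGraph.Adj (pmk u) (pmk v) := by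
  rw [fareyGraph, SimpleGraph.fromRel_adj]
  refine ⟨pmk_ne_of_det2 hu.ne_zero hv.ne_zero hd, Or.inl ?_⟩
  exact ⟨u.1, u.2, v.1, v.2, hu, hv, by simpa [det2] using hd, rfl, rfl⟩

lemma adj_elim {x y : P1Q} (h : fareyGraph.Adj x y) :
    ∃ u v : V2, Prim u ∧ Prim v ∧ |det2 u v| = 1 ∧ x = pmk u ∧ y = pmk v := by
  rw [fareyGraph, SimpleGraph.fromRel_adj] at h
  rcases h.2 with h' | h'
  · obtain ⟨a, b, c, d, h1, h2, h3, h4, h5⟩ := h'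
    exact ⟨(a, b), (c, d), h1, h2, by simpa [det2] using h3, h4, h5⟩
  · obtain ⟨a, b, c, d, h1, h2, h3, h4, h5⟩ := h'
    refine ⟨(c, d), (a, b), h2, h1, ?_, h5, h4⟩
    rw [show det2 (c, d) (a, b) = -(a * d - b * c) by simp [det2]; ring, abs_neg]
    exact h3

lemma det2_abs_of_adj {u v : V2} (hu : Prim u) (hv : Prim v)
    (h : fareyGraph.Adj (pmk u) (pmk v)) : |det2 u v| = 1 := by
  obtain ⟨u', v', hu', hv', hd, hx, hy⟩ := adj_elim h
  rcases eq_or_eq_neg_of_pmk_eq hu hu' hx with h1 | h1 <;>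
    rcases eq_or_eq_neg_of_pmk_eq hv hv' hy with h2 | h2 <;> rw [h1, h2]
  · exact hd
  · rw [det2_neg_right, abs_neg]; exact hd
  · rw [det2_neg_left, abs_neg]; exact hd
  · rw [det2_neg_left, det2_neg_right, neg_neg]; exact hd

/-- The key classification: common neighbours of an edge. -/
lemma common_neighbor {u v w : V2} (hu : Prim u) (hv : Prim v) (hw : Prim w)
    (huv : |det2 u v| = 1) (huw : |det2 u w| = 1) (hvw : |det2 v w| = 1) :
    pmk w = pmk (u + v) ∨ pmk w = pmk (u - v) := by
  set D := det2 u v with hD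
  have hDD : D * D = 1 := by
    rcases (abs_eq (by norm_num : (0:ℤ) ≤ 1)).mp huv with h | h <;> rw [h] <;> ring
  have id1 : D * w.1 = det2 w v * u.1 + det2 u w * v.1 := by simp only [hD]; unfold det2; ring
  have id2 : D * w.2 = det2 w v * u.2 + det2 u w * v.2 := by simp only [hD]; unfold det2; ring
  set m := D * det2 w v with hm
  set n := D * det2 u w with hn
  have hw1 : w.1 = m * u.1 + n * v.1 := by
    have : w.1 = D * (D * w.1) := by rw [← mul_assoc, hDD, one_mul]
    rw [this, id1]; ring
  have hw2 : w.2 = m * u.2 + n * v.2 := by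
    have : w.2 = D * (D * w.2) := by rw [← mul_assoc, hDD, one_mul]
    rw [this, id2]; ring
  have habsm : |m| = 1 := by
    rw [hm, abs_mul, show |det2 w v| = 1 from ?_, huv, one_mul]
    rw [show det2 w v = -det2 v w from by unfold det2; ring, abs_neg]
    exact hvw
  have habsn : |n| = 1 := by rw [hn, abs_mul, huv, huw, one_mul]
  rcases (abs_eq (by norm_num : (0:ℤ) ≤ 1)).mp habsm with hm1 | hm1 <;>
    rcases (abs_eq (by norm_num : (0:ℤ) ≤ 1)).mp habsn with hn1 | hn1
  · left
    have : w = u + v := Prod.ext (by simp [hw1, hm1, hn1]) (by simp [hw2, hm1, hn1])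
    rw [this]
  · right
    have : w = u - v := by
      refine Prod.ext ?_ ?_ <;> simp [hw1, hw2, hm1, hn1] <;> ring
    rw [this]
  · right
    have : w = -(u - v) := by
      refine Prod.ext ?_ ?_ <;> simp [hw1, hw2, hm1, hn1] <;> ring
    rw [this, pmk_neg]
  · left
    have : w = -(u + v) := by
      refine Prod.ext ?_ ?_ <;> simp [hw1, hw2, hm1, hn1] <;> ring
    rw [this, pmk_neg]

end Farey
namespace Farey

/-- entries of g as integers -/
def ent (g : GL (Fin 2) ℤ) (i j : Fin 2) : ℤ := (g : Matrix (Fin 2) (Fin 2) ℤ) i j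

/-- action of g on integer vectors -/
def gact (g : GL (Fin 2) ℤ) (u : V2) : V2 :=
  (ent g 0 0 * u.1 + ent g 0 1 * u.2, ent g 1 0 * u.1 + ent g 1 1 * u.2)

lemma detg_cases (g : GL (Fin 2) ℤ) :
    ent g 0 0 * ent g 1 1 - ent g 0 1 * ent g 1 0 = 1 ∨
    ent g 0 0 * ent g 1 1 - ent g 0 1 * ent g 1 0 = -1 := by
  have h : IsUnit (g : Matrix (Fin 2) (Fin 2) ℤ).det := by
    exact (Matrix.isUnit_iff_isUnit_det _).mp g.isUnit
  rw [Matrix.det_fin_two] at h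
  rcases Int.isUnit_iff.mp h with h' | h'
  · left; exact h'
  · right; exact h'

lemma inv_ent_mul (g : GL (Fin 2) ℤ) (i j : Fin 2) :
    ent g⁻¹ i 0 * ent g 0 j + ent g⁻¹ i 1 * ent g 1 j = if i = j then 1 else 0 := by
  have h : ((g⁻¹ : GL (Fin 2) ℤ) : Matrix (Fin 2) (Fin 2) ℤ) * ((g : GL (Fin 2) ℤ) : Matrix (Fin 2) (Fin 2) ℤ) = 1 := by
    rw [← Units.val_mul, inv_mul_cancel, Units.val_one]
  have := congrFun (congrFun h i) j
  rw [Matrix.mul_apply, Fin.sum_univ_two] at this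
  rw [ent, ent, ent, ent, this]
  by_cases hij : i = j
  · simp [hij, Matrix.one_apply]
  · simp [hij, Matrix.one_apply]

lemma gact_inv_gact (g : GL (Fin 2) ℤ) (u : V2) : gact g⁻¹ (gact g u) = u := by
  have h00 := inv_ent_mul g 0 0
  have h01 := inv_ent_mul g 0 1
  have h10 := inv_ent_mul g 1 0
  have h11 := inv_ent_mul g 1 1
  norm_num at h00 h01 h10 h11
  refine Prod.ext ?_ ?_ <;> simp only [gact]
  · linear_combination u.1 * h00 + u.2 * h01
  · linear_combination u.1 * h10 + u.2 * h11

lemma gact_ne_zero (g : GL (Fin 2) ℤ) {u : V2} (hu : u ≠ 0) : gact g u ≠ 0 := by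
  intro h
  apply hu
  have := gact_inv_gact g u
  rw [h] at this
  rw [← this]
  simp [gact]

lemma gact_prim (g : GL (Fin 2) ℤ) {u : V2} (hu : Prim u) : Prim (gact g u) := by
  rw [Prim, ← Int.isCoprime_iff_gcd_eq_one] at *
  obtain ⟨a, b, hab⟩ := hu
  have hrec := gact_inv_gact g u
  have h1 : u.1 = ent g⁻¹ 0 0 * (gact g u).1 + ent g⁻¹ 0 1 * (gact g u).2 := by
    conv_lhs => rw [← hrec]
    rfl
  have h2 : u.2 = ent g⁻¹ 1 0 * (gact g u).1 + ent g⁻¹ 1 1 * (gact g u).2 := by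
    conv_lhs => rw [← hrec]
    rfl
  exact ⟨a * ent g⁻¹ 0 0 + b * ent g⁻¹ 1 0, a * ent g⁻¹ 0 1 + b * ent g⁻¹ 1 1, by
    rw [← hab, h1, h2]; ring⟩

lemma det2_gact (g : GL (Fin 2) ℤ) (u v : V2) :
    det2 (gact g u) (gact g v) = (ent g 0 0 * ent g 1 1 - ent g 0 1 * ent g 1 0) * det2 u v := by
  simp only [det2, gact]; ring

lemma abs_det2_gact (g : GL (Fin 2) ℤ) (u v : V2) :
    |det2 (gact g u) (gact g v)| = |det2 u v| := by
  rw [det2_gact]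
  rcases detg_cases g with h | h <;> rw [h] <;> simp

lemma gact_add (g : GL (Fin 2) ℤ) (u v : V2) : gact g (u + v) = gact g u + gact g v := by
  simp only [gact, Prod.fst_add, Prod.snd_add, Prod.mk_add_mk]
  refine Prod.ext ?_ ?_ <;> simp <;> ring

lemma gact_sub (g : GL (Fin 2) ℤ) (u v : V2) : gact g (u - v) = gact g u - gact g v := by
  simp only [gact, Prod.fst_sub, Prod.snd_sub, Prod.mk_sub_mk]
  refine Prod.ext ?_ ?_ <;> simp <;> ring

/-- `fareyAct` computed on integer points. -/
lemma fareyAct_pmk (g : GL (Fin 2) ℤ) {u : V2} (hu : u ≠ 0) :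
    fareyAct g (pmk u) = pmk (gact g u) := by
  rw [pmk_def hu, fareyAct, Projectivization.map_mk, pmk_def (gact_ne_zero g hu)]
  congr 1
  funext i
  fin_cases i <;>
    simp [matQ, Matrix.mulVecLin_apply, Matrix.mulVec, dotProduct, Fin.sum_univ_two,
      gact, ent] <;> push_cast <;> ring

end Farey
namespace Farey

def triMat (u v : V2) : Matrix (Fin 2) (Fin 2) ℤ := !![u.1, v.1; u.2, v.2]

lemma triMat_det (u v : V2) : (triMat u v).det = det2 u v := by
  rw [triMat, Matrix.det_fin_two_of, det2]; ring

lemma triMat_isUnit {u v : V2} (h : |det2 u v| = 1) : IsUnit (triMat u v) := by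
  rw [Matrix.isUnit_iff_isUnit_det, triMat_det, Int.isUnit_iff]
  rcases (abs_eq (by norm_num : (0:ℤ) ≤ 1)).mp h with h' | h'
  · exact Or.inl h'
  · exact Or.inr h'

noncomputable def glOf (u v : V2) (h : |det2 u v| = 1) : GL (Fin 2) ℤ := (triMat_isUnit h).unit

lemma glOf_val (u v : V2) (h : |det2 u v| = 1) :
    (glOf u v h : Matrix (Fin 2) (Fin 2) ℤ) = triMat u v := IsUnit.unit_spec _

lemma ent_glOf (u v : V2) (h : |det2 u v| = 1) :
    ent (glOf u v h) 0 0 = u.1 ∧ ent (glOf u v h) 0 1 = v.1 ∧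
    ent (glOf u v h) 1 0 = u.2 ∧ ent (glOf u v h) 1 1 = v.2 := by
  refine ⟨?_, ?_, ?_, ?_⟩ <;> rw [ent, glOf_val] <;> simp [triMat]

lemma gact_glOf (u v : V2) (h : |det2 u v| = 1) (w : V2) :
    gact (glOf u v h) w = (u.1 * w.1 + v.1 * w.2, u.2 * w.1 + v.2 * w.2) := by
  obtain ⟨h1, h2, h3, h4⟩ := ent_glOf u v h
  simp [gact, h1, h2, h3, h4]

lemma fareyAct_one (x : P1Q) : fareyAct 1 x = x := by
  induction x using Projectivization.ind with
  | h v hv =>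
    rw [fareyAct, Projectivization.map_mk]
    congr 1
    rw [matQ_one]
    simp

lemma matQ_neg_one : matQ (-1) = (-1 : Matrix (Fin 2) (Fin 2) ℚ) := by
  have : ((-1 : GL (Fin 2) ℤ) : Matrix (Fin 2) (Fin 2) ℤ) = -1 := by
    rw [Units.val_neg, Units.val_one]
  rw [matQ, this]
  ext i j
  by_cases hij : i = j <;> simp [Matrix.one_apply, hij]

lemma fareyAct_neg_one (x : P1Q) : fareyAct (-1) x = x := by
  induction x using Projectivization.ind with
  | h v hv =>
    rw [fareyAct, Projectivization.map_mk]
    rw [Projectivization.mk_eq_mk_iff]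
    refine ⟨-1, ?_⟩
    rw [matQ_neg_one]
    simp [Matrix.neg_mulVec]

/-- pointwise stabilizer of the standard triangle -/
lemma stab_triangle (g : GL (Fin 2) ℤ)
    (h1 : fareyAct g (pmk (1,0)) = pmk (1,0))
    (h2 : fareyAct g (pmk (0,1)) = pmk (0,1))
    (h3 : fareyAct g (pmk (1,1)) = pmk (1,1)) : g = 1 ∨ g = -1 := by
  have p1 : Prim ((1,0) : V2) := by norm_num [Prim]
  have p2 : Prim ((0,1) : V2) := by norm_num [Prim]
  have p3 : Prim ((1,1) : V2) := by norm_num [Prim]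
  rw [fareyAct_pmk g p1.ne_zero] at h1
  rw [fareyAct_pmk g p2.ne_zero] at h2
  rw [fareyAct_pmk g p3.ne_zero] at h3
  have e1 := eq_or_eq_neg_of_pmk_eq (gact_prim g p1) p1 h1
  have e2 := eq_or_eq_neg_of_pmk_eq (gact_prim g p2) p2 h2
  have e3 := eq_or_eq_neg_of_pmk_eq (gact_prim g p3) p3 h3
  simp only [gact, Prod.mk.injEq, Prod.ext_iff, Prod.fst_neg, Prod.snd_neg] at e1 e2 e3
  norm_num at e1 e2 e3
  -- entries
  have hcase : (ent g 0 0 = 1 ∧ ent g 0 1 = 0 ∧ ent g 1 0 = 0 ∧ ent g 1 1 = 1) ∨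
      (ent g 0 0 = -1 ∧ ent g 0 1 = 0 ∧ ent g 1 0 = 0 ∧ ent g 1 1 = -1) := by
    rcases e1 with ⟨a1, a2⟩ | ⟨a1, a2⟩ <;> rcases e2 with ⟨b1, b2⟩ | ⟨b1, b2⟩ <;>
      rcases e3 with ⟨c1, c2⟩ | ⟨c1, c2⟩ <;> first | (left; omega) | (right; omega)
  have : (g : Matrix (Fin 2) (Fin 2) ℤ) = 1 ∨ (g : Matrix (Fin 2) (Fin 2) ℤ) = -1 := by
    rcases hcase with ⟨q1, q2, q3, q4⟩ | ⟨q1, q2, q3, q4⟩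
    · left
      ext i j
      fin_cases i <;> fin_cases j <;>
        simp only [Matrix.one_apply] <;>
        first
          | simpa [ent] using q1 | simpa [ent] using q2 | simpa [ent] using q3 | simpa [ent] using q4
    · right
      ext i j
      fin_cases i <;> fin_cases j <;>
        simp only [Matrix.neg_apply, Matrix.one_apply] <;>
        first
          | simpa [ent] using q1 | simpa [ent] using q2 | simpa [ent] using q3 | simpa [ent] using q4
  rcases this with h | h
  · left; exact Units.ext h
  · right
    apply Units.ext
    rw [h, Units.val_neg, Units.val_one]

end Farey
namespace Farey

lemma prim_of_det2_left {u v : V2} (h : |det2 u v| = 1) : Prim u := by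
  have hd : (Int.gcd u.1 u.2 : ℤ) ∣ det2 u v := by
    exact dvd_sub ((Int.gcd_dvd_left _ _).mul_right _) ((Int.gcd_dvd_right _ _).mul_right _)
  have h1 : (Int.gcd u.1 u.2 : ℤ) ∣ 1 := by
    rcases (abs_eq (by norm_num : (0:ℤ) ≤ 1)).mp h with h' | h'
    · rwa [h'] at hd
    · rw [h'] at hd; exact (dvd_neg).mp hd
  have := Int.eq_one_of_dvd_one (by positivity) h1
  exact_mod_cast this

lemma prim_of_det2_right {u v : V2} (h : |det2 u v| = 1) : Prim v := by
  apply prim_of_det2_left (v := u)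
  rw [show det2 v u = -det2 u v from by unfold det2; ring, abs_neg]
  exact h

/-- The Stern-Brocot tree of edges, with sign `σ` on the first coordinate of the root. -/
def sbEdge (σ : ℤ) : List Bool → V2 × V2
  | [] => ((σ, 0), (0, 1))
  | b :: l => if b then ((sbEdge σ l).1, (sbEdge σ l).1 + (sbEdge σ l).2)
              else ((sbEdge σ l).1 + (sbEdge σ l).2, (sbEdge σ l).2)

/-- The mediant at a node of the tree. -/
def med (σ : ℤ) (l : List Bool) : V2 := (sbEdge σ l).1 + (sbEdge σ l).2

lemma det2_add_right (u v : V2) : det2 u (u + v) = det2 u v := by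
  simp [det2]; ring

lemma det2_add_left (u v : V2) : det2 (u + v) v = det2 u v := by
  simp [det2]; ring

lemma det2_sbEdge (σ : ℤ) (l : List Bool) :
    det2 (sbEdge σ l).1 (sbEdge σ l).2 = σ := by
  induction l with
  | nil => simp [sbEdge, det2]
  | cons b l ih =>
    by_cases hb : b <;> simp [sbEdge, hb, det2_add_right, det2_add_left, ih]

lemma sbEdge_fst (σ : ℤ) (l : List Bool) :
    (sbEdge σ l).1 = (σ, 0) ∨ ∃ l' : List Bool, l'.length < l.length ∧ (sbEdge σ l).1 = med σ l' := by
  induction l with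
  | nil => left; rfl
  | cons b l ih =>
    by_cases hb : b
    · rcases ih with h | ⟨l', hl', h⟩
      · left; simp [sbEdge, hb, h]
      · right; exact ⟨l', by simpa using Nat.lt_succ_of_lt hl', by simp [sbEdge, hb, h]⟩
    · right; exact ⟨l, by simp, by simp [sbEdge, hb, med]⟩

lemma sbEdge_snd (σ : ℤ) (l : List Bool) :
    (sbEdge σ l).2 = (0, 1) ∨ ∃ l' : List Bool, l'.length < l.length ∧ (sbEdge σ l).2 = med σ l' := by
  induction l with
  | nil => left; rfl
  | cons b l ih =>
    by_cases hb : b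
    · right; exact ⟨l, by simp, by simp [sbEdge, hb, med]⟩
    · rcases ih with h | ⟨l', hl', h⟩
      · left; simp [sbEdge, hb, h]
      · right; exact ⟨l', by simpa using Nat.lt_succ_of_lt hl', by simp [sbEdge, hb, h]⟩

/-- The partner (second common neighbour) of the mediant of a non-root edge is a vertex of the
parent edge. -/
lemma partner_cons (σ : ℤ) (b : Bool) (l : List Bool) :
    pmk ((sbEdge σ (b :: l)).1 - (sbEdge σ (b :: l)).2)
      = pmk (if b then (sbEdge σ l).2 else (sbEdge σ l).1) := by
  cases b
  · have h : sbEdge σ (false :: l) = ((sbEdge σ l).1 + (sbEdge σ l).2, (sbEdge σ l).2) := by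
      simp [sbEdge]
    rw [h, if_neg (by simp)]
    rw [show ((sbEdge σ l).1 + (sbEdge σ l).2, (sbEdge σ l).2).1 -
        ((sbEdge σ l).1 + (sbEdge σ l).2, (sbEdge σ l).2).2 = (sbEdge σ l).1 by
      refine Prod.ext ?_ ?_ <;> simp]
  · have h : sbEdge σ (true :: l) = ((sbEdge σ l).1, (sbEdge σ l).1 + (sbEdge σ l).2) := by
      simp [sbEdge]
    rw [h, if_pos rfl]
    rw [show ((sbEdge σ l).1, (sbEdge σ l).1 + (sbEdge σ l).2).1 -
        ((sbEdge σ l).1, (sbEdge σ l).1 + (sbEdge σ l).2).2 = -(sbEdge σ l).2 by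
      refine Prod.ext ?_ ?_ <;> simp]
    exact pmk_neg _

/-- mirror: negating the first coordinates. -/
def mir (u : V2) : V2 := (-u.1, u.2)

lemma sbEdge_neg (σ : ℤ) (l : List Bool) :
    sbEdge (-σ) l = (mir (sbEdge σ l).1, mir (sbEdge σ l).2) := by
  induction l with
  | nil => simp [sbEdge, mir]
  | cons b l ih =>
    by_cases hb : b <;>
      simp only [sbEdge, hb, if_true, if_false, ih] <;>
      refine Prod.ext ?_ ?_ <;> simp [mir] <;> ring

lemma med_neg (σ : ℤ) (l : List Bool) : med (-σ) l = mir (med σ l) := by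
  rw [med, med, sbEdge_neg]
  refine Prod.ext ?_ ?_ <;> simp [mir] <;> ring

/-- Reachability: every nonnegative unimodular pair is an edge of the positive tree. -/
lemma sb_reach : ∀ n : ℕ, ∀ u v : V2, 0 ≤ u.1 → 0 ≤ u.2 → 0 ≤ v.1 → 0 ≤ v.2 →
    u.1 + u.2 + v.1 + v.2 ≤ n → det2 u v = 1 → ∃ l : List Bool, sbEdge 1 l = (u, v) := by
  intro n
  induction n with
  | zero =>
    intro u v h1 h2 h3 h4 hn hd
    exfalso
    have hu : u.1 = 0 ∧ u.2 = 0 := by omega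
    unfold det2 at hd
    rw [hu.1, hu.2] at hd
    simp at hd
  | succ n ih =>
    intro u v h1 h2 h3 h4 hn hd
    have hvne : v ≠ 0 := by
      intro h; rw [h] at hd; unfold det2 at hd; simp at hd
    have hune : u ≠ 0 := by
      intro h; rw [h] at hd; unfold det2 at hd; simp at hd
    by_cases hc1 : v.1 ≤ u.1 ∧ v.2 ≤ u.2
    · -- parent (u - v, v), child b = false
      obtain ⟨l, hl⟩ := ih (u - v) v (by simp; omega) (by simp; omega) h3 h4
        (by simp only [Prod.fst_sub, Prod.snd_sub]
            have : v.1 + v.2 ≥ 1 := by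
              rcases pair_ne_iff.mp hvne with h
              omega
            omega)
        (by rw [show u - v = u - v from rfl]
            have : det2 (u - v) v = det2 u v := by unfold det2; simp; ring
            rw [this, hd])
      refine ⟨false :: l, ?_⟩
      have hre : sbEdge 1 (false :: l) = ((sbEdge 1 l).1 + (sbEdge 1 l).2, (sbEdge 1 l).2) := by
        simp [sbEdge]
      rw [hre, hl]
      show ((u - v) + v, v) = (u, v)
      rw [sub_add_cancel]
    · by_cases hc2 : u.1 ≤ v.1 ∧ u.2 ≤ v.2
      · -- parent (u, v - u), child b = true
        obtain ⟨l, hl⟩ := ih u (v - u) h1 h2 (by simp; omega) (by simp; omega)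
          (by simp only [Prod.fst_sub, Prod.snd_sub]
              have : u.1 + u.2 ≥ 1 := by
                rcases pair_ne_iff.mp hune with h
                omega
              omega)
          (by have : det2 u (v - u) = det2 u v := by unfold det2; simp; ring
              rw [this, hd])
        refine ⟨true :: l, ?_⟩
        have hre : sbEdge 1 (true :: l) = ((sbEdge 1 l).1, (sbEdge 1 l).1 + (sbEdge 1 l).2) := by
          simp [sbEdge]
        rw [hre, hl]
        show (u, u + (v - u)) = (u, v)
        rw [add_sub_cancel]
      · -- mixed case: forces the root
        unfold det2 at hd
        push_neg at hc1 hc2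
        refine ⟨[], ?_⟩
        rw [sbEdge]
        by_cases h5 : v.1 ≤ u.1
        · have h6 : u.2 < v.2 := hc1 h5
          have h7 : v.1 < u.1 := by
            rcases lt_or_ge v.1 u.1 with h | h
            · exact h
            · have := hc2 h; omega
          have h8 : v.1 = 0 ∧ u.2 = 0 := by constructor <;> nlinarith
          have h9 : u.1 * v.2 = 1 := by rw [← hd, h8.1, h8.2]; ring
          have h10 : u.1 = 1 := by
            have : u.1 ∣ 1 := ⟨v.2, h9.symm⟩
            exact Int.eq_one_of_dvd_one h1 this
          have h11 : v.2 = 1 := by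
            have : v.2 ∣ 1 := ⟨u.1, by rw [← h9]; ring⟩
            exact Int.eq_one_of_dvd_one h4 this
          rw [show u = (1, 0) from Prod.ext h10 h8.2,
            show v = (0, 1) from Prod.ext h8.1 h11]
        · push_neg at h5
          have h6 : v.2 < u.2 := hc2 (le_of_lt h5)
          exfalso
          nlinarith

end Farey
namespace Farey

/-- Existence of Stern-Brocot parents. -/
lemma exists_parents {p q : ℤ} (hp : 1 ≤ p) (hq : 1 ≤ q) (hg : Int.gcd p q = 1) :
    ∃ u v : V2, 0 ≤ u.1 ∧ 0 ≤ u.2 ∧ 0 ≤ v.1 ∧ 0 ≤ v.2 ∧ det2 u v = 1 ∧ u + v = (p, q) := by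
  have hco : IsCoprime p q := Int.isCoprime_iff_gcd_eq_one.mpr hg
  obtain ⟨a, b, hab⟩ := hco
  -- x0 * q - y0 * p = 1 with x0 = b, y0 = -a
  set x0 := b
  set y0 := -a with hy0
  have hxy : x0 * q - y0 * p = 1 := by rw [hy0]; linarith [hab]
  set r := (x0 - 1) % p with hr
  have hp0 : 0 < p := hp
  have hr0 : 0 ≤ r := Int.emod_nonneg _ (by omega)
  have hr1 : r < p := Int.emod_lt_of_pos _ hp0
  set k := (x0 - 1) / p with hk
  have hdecomp : x0 - 1 = p * k + r := by rw [hk, hr]; exact (Int.mul_ediv_add_emod _ _).symm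
  set x := r + 1 with hx
  set y := y0 - q * k with hy
  have hxq : x * q - y * p = 1 := by
    have : x = x0 - p * k := by omega
    rw [this, hy]
    linear_combination hxy
  have hx1 : 1 ≤ x := by omega
  have hxp : x ≤ p := by omega
  have hy0' : 0 ≤ y := by nlinarith
  have hyq : y < q := by nlinarith
  refine ⟨(x, y), (p - x, q - y), by omega, by omega, by simp; omega, by simp; omega, ?_, ?_⟩
  · show x * (q - y) - y * (p - x) = 1
    linear_combination hxq
  · refine Prod.ext ?_ ?_ <;> simp

/-- Completeness of the positive Stern-Brocot tree. -/
lemma med_complete {p q : ℤ} (hp : 1 ≤ p) (hq : 1 ≤ q) (hg : Int.gcd p q = 1) :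
    ∃ l : List Bool, med 1 l = (p, q) := by
  obtain ⟨u, v, h1, h2, h3, h4, h5, h6⟩ := exists_parents hp hq hg
  obtain ⟨l, hl⟩ := sb_reach (u.1 + u.2 + v.1 + v.2).toNat u v h1 h2 h3 h4 (by omega) h5
  exact ⟨l, by rw [med, hl, h6]⟩

/-- Every point of the projective line has a primitive integer representative with
nonnegative second coordinate. -/
lemma exists_prim_rep (x : P1Q) : ∃ u : V2, Prim u ∧ 0 ≤ u.2 ∧ x = pmk u := by
  induction x using Projectivization.ind with
  | h v hv =>
    set a0 := v 0 with ha0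
    set a1 := v 1 with ha1
    have hva : v = ![a0, a1] := by funext i; fin_cases i <;> rfl
    set p' : ℤ := a0.num * (a1.den : ℤ) with hp'
    set q' : ℤ := a1.num * (a0.den : ℤ) with hq'
    have hne : ¬(p' = 0 ∧ q' = 0) := by
      rintro ⟨h1, h2⟩
      apply hv
      have e0 : a0 = 0 := by
        have := mul_eq_zero.mp h1
        rcases this with h | h
        · exact Rat.num_eq_zero.mp h
        · exact absurd h (by exact_mod_cast a1.den_nz)
      have e1 : a1 = 0 := by
        have := mul_eq_zero.mp h2
        rcases this with h | h
        · exact Rat.num_eq_zero.mp h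
        · exact absurd h (by exact_mod_cast a0.den_nz)
      rw [hva, e0, e1]
      funext i; fin_cases i <;> simp
    have hpq : (p', q') ≠ (0 : V2) := pair_ne_iff.mpr hne
    have hmk : Projectivization.mk ℚ v hv = pmk ((p', q') : V2) := by
      rw [pmk_def hpq, Projectivization.mk_eq_mk_iff]
      have hden : ((a0.den : ℚ) * (a1.den : ℚ)) ≠ 0 := by
        have h1 : (a0.den : ℚ) ≠ 0 := by exact_mod_cast a0.den_nz
        have h2 : (a1.den : ℚ) ≠ 0 := by exact_mod_cast a1.den_nz
        exact mul_ne_zero h1 h2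
      have h0 : (a0.den : ℚ) ≠ 0 := fun h => hden (by rw [h]; ring)
      have h1 : (a1.den : ℚ) ≠ 0 := fun h => hden (by rw [h]; ring)
      have e0 : (a0.num : ℚ) = a0 * (a0.den : ℚ) := (div_eq_iff h0).mp (Rat.num_div_den a0)
      have e1 : (a1.num : ℚ) = a1 * (a1.den : ℚ) := (div_eq_iff h1).mp (Rat.num_div_den a1)
      refine ⟨Units.mk0 (((a0.den : ℚ) * (a1.den : ℚ))⁻¹) (inv_ne_zero hden), ?_⟩
      rw [hva]
      funext i
      fin_cases i <;>
        simp only [Units.smul_def, Units.val_mk0, Pi.smul_apply, Matrix.cons_val_zero,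
          Matrix.cons_val_one, Matrix.head_cons, smul_eq_mul, hp', hq'] <;>
        push_cast <;> field_simp <;>
        first
          | linear_combination ((a1.den : ℚ)) * e0
          | linear_combination ((a0.den : ℚ)) * e1
          | linear_combination e0
          | linear_combination e1
    -- reduce to a primitive vector
    set d : ℤ := (Int.gcd p' q' : ℤ) with hd
    have hgcdpos : 0 < Int.gcd p' q' := Int.gcd_pos_iff.mpr (by tauto)
    have hdpos : 0 < d := by rw [hd]; exact Int.natCast_pos.mpr hgcdpos
    have hdvd1 : d ∣ p' := Int.gcd_dvd_left _ _
    have hdvd2 : d ∣ q' := Int.gcd_dvd_right _ _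
    set u0 : V2 := (p' / d, q' / d) with hu0
    have hprim : Prim u0 := by
      rw [Prim, hu0]
      exact Int.gcd_div_gcd_div_gcd hgcdpos
    have hu0ne : u0 ≠ 0 := hprim.ne_zero
    have hmk2 : pmk ((p', q') : V2) = pmk u0 := by
      apply pmk_eq_of_det2_eq_zero hpq hu0ne
      show p' * (q' / d) - q' * (p' / d) = 0
      obtain ⟨p'', hp''⟩ := hdvd1
      obtain ⟨q'', hq''⟩ := hdvd2
      rw [hp'', hq'', Int.mul_ediv_cancel_left _ (by omega), Int.mul_ediv_cancel_left _ (by omega)]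
      ring
    rcases le_or_gt 0 u0.2 with hs | hs
    · exact ⟨u0, hprim, hs, by rw [hmk, hmk2]⟩
    · refine ⟨-u0, hprim.neg, ?_, ?_⟩
      · show 0 ≤ -u0.2
        omega
      · rw [hmk, hmk2, pmk_neg]

/-- Classification of points of the projective line. -/
lemma classify (x : P1Q) :
    x = pmk (1, 0) ∨ x = pmk (0, 1) ∨
      ∃ σ : ℤ, (σ = 1 ∨ σ = -1) ∧ ∃ l : List Bool, x = pmk (med σ l) := by
  obtain ⟨u, hprim, hs, rfl⟩ := exists_prim_rep x
  rcases eq_or_lt_of_le hs with hz | hpos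
  · -- u.2 = 0
    left
    have h2 : u.2 = 0 := hz.symm
    have : u.1 = 1 ∨ u.1 = -1 := by
      have hp := hprim
      rw [Prim, h2] at hp
      simp [Int.gcd] at hp
      omega
    rcases this with h | h
    · rw [show u = ((1, 0) : V2) from Prod.ext h h2]
    · rw [show u = (-(1, 0) : V2) from Prod.ext (by simp [h]) (by simp [h2]), pmk_neg]
  · rcases lt_trichotomy u.1 0 with hneg | hzero | hposx
    · -- negative: mirror tree
      right; right
      refine ⟨-1, Or.inr rfl, ?_⟩
      have hg : Int.gcd (-u.1) u.2 = 1 := by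
        have : Int.gcd (-u.1) u.2 = Int.gcd u.1 u.2 := by simp [Int.gcd]
        rw [this]; exact hprim
      obtain ⟨l, hl⟩ := med_complete (by omega) (by omega) hg
      refine ⟨l, ?_⟩
      rw [show (-1 : ℤ) = -1 from rfl, med_neg, hl]
      congr 1
      refine Prod.ext ?_ ?_ <;> simp [mir]
    · right; left
      have h2 : u.2 = 1 := by
        have hp := hprim
        rw [Prim, hzero] at hp
        simp [Int.gcd] at hp
        omega
      rw [show u = ((0, 1) : V2) from Prod.ext hzero h2]
    · right; right
      refine ⟨1, Or.inl rfl, ?_⟩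
      obtain ⟨l, hl⟩ := med_complete (by omega) (by omega) hprim
      exact ⟨l, by rw [hl]⟩

end Farey
namespace Farey

def Xset (n : ℕ) : Set P1Q :=
  {x | x = pmk (1, 0) ∨ x = pmk (0, 1) ∨
    ∃ σ : ℤ, (σ = 1 ∨ σ = -1) ∧ ∃ l : List Bool, l.length ≤ n ∧ x = pmk (med σ l)}

lemma Xset_mono (n : ℕ) : Xset n ⊆ Xset (n + 1) := by
  intro x hx
  rcases hx with h | h | ⟨σ, hσ, l, hl, h⟩
  · exact Or.inl h
  · exact Or.inr (Or.inl h)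
  · exact Or.inr (Or.inr ⟨σ, hσ, l, by omega, h⟩)

lemma Xset_finite (n : ℕ) : (Xset n).Finite := by
  have hsub : Xset n ⊆ {pmk (1, 0), pmk (0, 1)} ∪
      (fun p : ℤ × List Bool => pmk (med p.1 p.2)) ''
        (({1, -1} : Set ℤ) ×ˢ {l : List Bool | l.length ≤ n}) := by
    intro x hx
    rcases hx with h | h | ⟨σ, hσ, l, hl, h⟩
    · exact Or.inl (Or.inl h)
    · exact Or.inl (Or.inr h)
    · exact Or.inr ⟨(σ, l), ⟨by rcases hσ with h' | h' <;> simp [h'], hl⟩, h.symm⟩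
  refine Set.Finite.subset ?_ hsub
  refine Set.Finite.union (by simp) ?_
  refine Set.Finite.image _ (Set.Finite.prod (by simp) (List.finite_length_le Bool n))

lemma mem10 (n : ℕ) : pmk (1, 0) ∈ Xset n := Or.inl rfl
lemma mem01 (n : ℕ) : pmk (0, 1) ∈ Xset n := Or.inr (Or.inl rfl)

lemma memMed {n : ℕ} {σ : ℤ} (hσ : σ = 1 ∨ σ = -1) {l : List Bool} (hl : l.length ≤ n) :
    pmk (med σ l) ∈ Xset n := Or.inr (Or.inr ⟨σ, hσ, l, hl, rfl⟩)

lemma med_one_nil : med 1 [] = ((1, 1) : V2) := by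
  rw [med, sbEdge]
  exact Prod.ext (by norm_num) (by norm_num)

lemma med_neg_nil : med (-1) [] = ((-1, 1) : V2) := by
  rw [med, sbEdge]
  exact Prod.ext (by norm_num) (by norm_num)

lemma mem11 (n : ℕ) : pmk (1, 1) ∈ Xset n := by
  rw [← med_one_nil]
  exact memMed (Or.inl rfl) (by simp)

lemma pmk_sigma {σ : ℤ} (hσ : σ = 1 ∨ σ = -1) : pmk ((σ, 0) : V2) = pmk (1, 0) := by
  rcases hσ with h | h
  · rw [h]
  · rw [h, show ((-1, 0) : V2) = -(1, 0) from Prod.ext rfl (by norm_num), pmk_neg]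

/-- helper: adjacency gives a compatible primitive representative of the other endpoint. -/
lemma adj_rep {x y : P1Q} {u : V2} (hu : Prim u) (hx : x = pmk u) (h : fareyGraph.Adj x y) :
    ∃ w : V2, Prim w ∧ y = pmk w ∧ |det2 u w| = 1 := by
  rw [hx] at h
  obtain ⟨u', w, hu', hw, hd, hx', hy⟩ := adj_elim h
  rcases eq_or_eq_neg_of_pmk_eq hu hu' hx' with rfl | h1
  · exact ⟨w, hw, hy, hd⟩
  · refine ⟨w, hw, hy, ?_⟩
    rw [h1, det2_neg_left, abs_neg]
    exact hd

lemma det2_sub_right (u v : V2) : det2 u (u - v) = -det2 u v := by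
  simp [det2]; ring

lemma det2_sub_left (u v : V2) : det2 (u - v) v = det2 u v := by
  simp [det2]; ring

lemma det2_vadd (u v : V2) : det2 v (u + v) = -det2 u v := by
  simp [det2]; ring

/-- The forcing lemma: the image of a mediant is determined. -/
lemma force {n : ℕ} {φ : P1Q → P1Q}
    (hsimp : FareySimplicial (Xset n) φ) (hinj : FareyLocallyInjective (Xset n) φ)
    (g : GL (Fin 2) ℤ) {u v w' : V2} (hd : |det2 u v| = 1)
    (hmu : pmk u ∈ Xset n) (hmv : pmk v ∈ Xset n)
    (hmw : pmk (u + v) ∈ Xset n) (hmw' : pmk w' ∈ Xset n)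
    (hw' : pmk w' = pmk (u - v))
    (hφu : φ (pmk u) = fareyAct g (pmk u)) (hφv : φ (pmk v) = fareyAct g (pmk v))
    (hφw' : φ (pmk w') = fareyAct g (pmk w')) :
    φ (pmk (u + v)) = fareyAct g (pmk (u + v)) := by
  have hu : Prim u := prim_of_det2_left hd
  have hv : Prim v := prim_of_det2_right hd
  have hpadd : Prim (u + v) := prim_of_det2_left (by rw [det2_add_left]; exact hd)
  have hpsub : Prim (u - v) := prim_of_det2_left (by rw [det2_sub_left]; exact hd)
  have hadd_u : fareyGraph.Adj (pmk u) (pmk (u + v)) :=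
    adj_of_det2 hu hpadd (by rw [det2_add_right]; exact hd)
  have hadd_v : fareyGraph.Adj (pmk v) (pmk (u + v)) :=
    adj_of_det2 hv hpadd (by rw [det2_vadd, abs_neg]; exact hd)
  have hsub_u : fareyGraph.Adj (pmk u) (pmk (u - v)) :=
    adj_of_det2 hu hpsub (by rw [det2_sub_right, abs_neg]; exact hd)
  -- images
  have hA1 : fareyGraph.Adj (φ (pmk u)) (φ (pmk (u + v))) := hsimp _ hmu _ hmw hadd_u
  have hA2 : fareyGraph.Adj (φ (pmk v)) (φ (pmk (u + v))) := hsimp _ hmv _ hmw hadd_v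
  rw [hφu, fareyAct_pmk g hu.ne_zero] at hA1
  rw [hφv, fareyAct_pmk g hv.ne_zero] at hA2
  obtain ⟨w, hwp, hφw, hd1⟩ := adj_rep (gact_prim g hu) rfl hA1
  obtain ⟨w2, hw2p, hφw2, hd2⟩ := adj_rep (gact_prim g hv) rfl hA2
  have hd2' : |det2 (gact g v) w| = 1 := by
    have : pmk w2 = pmk w := by rw [← hφw, ← hφw2]
    rcases eq_or_eq_neg_of_pmk_eq hw2p hwp this with rfl | h1
    · exact hd2
    · rw [show w = -w2 from by rw [h1]; simp, det2_neg_right, abs_neg]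
      exact hd2
  have hcn := common_neighbor (gact_prim g hu) (gact_prim g hv) hwp
    (by rw [abs_det2_gact]; exact hd) hd1 hd2'
  rcases hcn with hcn | hcn
  · rw [hφw, hcn, ← gact_add, ← fareyAct_pmk g hpadd.ne_zero]
  · -- contradiction case
    exfalso
    have husub : u - v ≠ 0 := hpsub.ne_zero
    have heq : φ (pmk (u + v)) = φ (pmk w') := by
      rw [hφw, hcn, ← gact_sub, ← fareyAct_pmk g husub, ← hw', hφw']
    have hstar := hinj (pmk u) hmu
    have hm1 : pmk (u + v) ∈ fareyClosedStar (Xset n) (pmk u) := ⟨hmw, Or.inr hadd_u⟩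
    have hm2 : pmk w' ∈ fareyClosedStar (Xset n) (pmk u) :=
      ⟨hmw', Or.inr (by rw [hw']; exact hsub_u)⟩
    have := hstar hm1 hm2 heq
    rw [hw'] at this
    have hzero := det2_eq_zero_of_pmk_eq hpadd.ne_zero hpsub.ne_zero this
    have : det2 (u + v) (u - v) = -2 * det2 u v := by simp [det2]; ring
    rw [this] at hzero
    rcases (abs_eq (by norm_num : (0:ℤ) ≤ 1)).mp hd with h | h <;> omega

end Farey
namespace Farey

lemma rigid (n : ℕ) (φ : P1Q → P1Q) (hsimp : FareySimplicial (Xset n) φ)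
    (hinj : FareyLocallyInjective (Xset n) φ) :
    ∃ g : GL (Fin 2) ℤ, ∀ y ∈ Xset n, φ y = fareyAct g y := by
  have p10 : Prim ((1, 0) : V2) := by norm_num [Prim]
  have p01 : Prim ((0, 1) : V2) := by norm_num [Prim]
  have p11 : Prim ((1, 1) : V2) := by norm_num [Prim]
  have adj1 : fareyGraph.Adj (pmk (1, 0)) (pmk (0, 1)) :=
    adj_of_det2 p10 p01 (by norm_num [det2])
  have adj2 : fareyGraph.Adj (pmk (1, 0)) (pmk (1, 1)) :=
    adj_of_det2 p10 p11 (by norm_num [det2])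
  have adj3 : fareyGraph.Adj (pmk (0, 1)) (pmk (1, 1)) :=
    adj_of_det2 p01 p11 (by norm_num [det2])
  have hAB := hsimp _ (mem10 n) _ (mem01 n) adj1
  have hAC := hsimp _ (mem10 n) _ (mem11 n) adj2
  have hBC := hsimp _ (mem01 n) _ (mem11 n) adj3
  obtain ⟨a, b, pa, pb, hdab, hA, hB⟩ := adj_elim hAB
  obtain ⟨c, pc, hC, hdac⟩ := adj_rep pa hA hAC
  obtain ⟨c2, pc2, hC2, hdbc2⟩ := adj_rep pb hB hBC
  have hdbc : |det2 b c| = 1 := by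
    have h' : pmk c2 = pmk c := by rw [← hC, ← hC2]
    rcases eq_or_eq_neg_of_pmk_eq pc2 pc h' with rfl | h1
    · exact hdbc2
    · rw [show c = -c2 from by rw [h1]; simp, det2_neg_right, abs_neg]
      exact hdbc2
  have hcn := common_neighbor pa pb pc hdab hdac hdbc
  obtain ⟨g, hg1, hg2, hg3⟩ : ∃ g : GL (Fin 2) ℤ,
      φ (pmk (1, 0)) = fareyAct g (pmk (1, 0)) ∧ φ (pmk (0, 1)) = fareyAct g (pmk (0, 1)) ∧
        φ (pmk (1, 1)) = fareyAct g (pmk (1, 1)) := by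
    rcases hcn with hcn | hcn
    · refine ⟨glOf a b hdab, ?_, ?_, ?_⟩
      · rw [fareyAct_pmk _ p10.ne_zero, gact_glOf, hA]
        congr 1
        exact Prod.ext (by simp) (by simp)
      · rw [fareyAct_pmk _ p01.ne_zero, gact_glOf, hB]
        congr 1
        exact Prod.ext (by simp) (by simp)
      · rw [fareyAct_pmk _ p11.ne_zero, gact_glOf, hC, hcn]
        congr 1
        exact Prod.ext (by simp) (by simp)
    · have hdab' : |det2 a (-b)| = 1 := by rw [det2_neg_right, abs_neg]; exact hdab
      refine ⟨glOf a (-b) hdab', ?_, ?_, ?_⟩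
      · rw [fareyAct_pmk _ p10.ne_zero, gact_glOf, hA]
        congr 1
        exact Prod.ext (by simp) (by simp)
      · rw [fareyAct_pmk _ p01.ne_zero, gact_glOf, hB]
        rw [show ((a.1 * ((0:ℤ),(1:ℤ)).1 + (-b).1 * ((0:ℤ),(1:ℤ)).2,
            a.2 * ((0:ℤ),(1:ℤ)).1 + (-b).2 * ((0:ℤ),(1:ℤ)).2) : V2) = -b from
          Prod.ext (by simp) (by simp), pmk_neg]
      · rw [fareyAct_pmk _ p11.ne_zero, gact_glOf, hC, hcn]
        congr 1
        refine Prod.ext ?_ ?_ <;> simp <;> ring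
  have hbase_sigma : ∀ σ : ℤ, (σ = 1 ∨ σ = -1) →
      φ (pmk ((σ, 0) : V2)) = fareyAct g (pmk ((σ, 0) : V2)) := by
    intro σ hσ
    rw [pmk_sigma hσ]
    exact hg1
  have claim : ∀ k : ℕ, ∀ σ : ℤ, (σ = 1 ∨ σ = -1) → ∀ l : List Bool,
      l.length ≤ k → l.length ≤ n → φ (pmk (med σ l)) = fareyAct g (pmk (med σ l)) := by
    intro k
    induction k with
    | zero =>
      intro σ hσ l hlk hln
      have hl : l = [] := List.length_eq_zero_iff.mp (Nat.le_zero.mp hlk)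
      subst hl
      rcases hσ with rfl | rfl
      · rw [med_one_nil]; exact hg3
      · rw [med_neg_nil]
        have hd : |det2 ((-1, 0) : V2) ((0, 1) : V2)| = 1 := by norm_num [det2]
        have h1 : ((-1, 0) : V2) + (0, 1) = ((-1, 1) : V2) := Prod.ext (by norm_num) (by norm_num)
        have h2 : pmk ((1, 1) : V2) = pmk (((-1, 0) : V2) - (0, 1)) := by
          rw [show ((-1, 0) : V2) - (0, 1) = -(1, 1) from Prod.ext (by norm_num) (by norm_num),
            pmk_neg]
        have hmu : pmk ((-1, 0) : V2) ∈ Xset n := by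
          rw [pmk_sigma (σ := -1) (Or.inr rfl)]; exact mem10 n
        have hmw : pmk (((-1, 0) : V2) + (0, 1)) ∈ Xset n := by
          rw [h1, ← med_neg_nil]; exact memMed (Or.inr rfl) (by simp)
        have hforce := force hsimp hinj g hd hmu (mem01 n) hmw (mem11 n) h2
          (hbase_sigma (-1) (Or.inr rfl)) hg2 hg3
        rw [h1] at hforce
        exact hforce
    | succ k ih =>
      intro σ hσ l hlk hln
      rcases Nat.lt_or_ge l.length (k + 1) with hcase | hcase
      · exact ih σ hσ l (by omega) hln
      · cases l with
        | nil => simp at hcase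
        | cons b l' =>
          simp only [List.length_cons] at hlk hln hcase
          have handle : ∀ z : V2,
              (z = (σ, 0) ∨ z = (0, 1) ∨
                ∃ l'' : List Bool, l''.length ≤ k ∧ l''.length ≤ n ∧ z = med σ l'') →
              pmk z ∈ Xset n ∧ φ (pmk z) = fareyAct g (pmk z) := by
            rintro z (rfl | rfl | ⟨l'', h1, h2, rfl⟩)
            · refine ⟨?_, hbase_sigma σ hσ⟩
              rw [pmk_sigma hσ]
              exact mem10 n
            · exact ⟨mem01 n, hg2⟩
            · exact ⟨memMed hσ h2, ih σ hσ l'' h1 h2⟩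
          obtain ⟨hmu, hfu⟩ := handle (sbEdge σ (b :: l')).1 (by
            rcases sbEdge_fst σ (b :: l') with h' | ⟨l'', hl'', h'⟩
            · exact Or.inl h'
            · right; right
              refine ⟨l'', ?_, ?_, h'⟩ <;> simp only [List.length_cons] at hl'' <;> omega)
          obtain ⟨hmv, hfv⟩ := handle (sbEdge σ (b :: l')).2 (by
            rcases sbEdge_snd σ (b :: l') with h' | ⟨l'', hl'', h'⟩
            · exact Or.inr (Or.inl h')
            · right; right
              refine ⟨l'', ?_, ?_, h'⟩ <;> simp only [List.length_cons] at hl'' <;> omega)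
          obtain ⟨hmW, hfW⟩ := handle (if b then (sbEdge σ l').2 else (sbEdge σ l').1) (by
            cases b
            · rw [if_neg (by simp)]
              rcases sbEdge_fst σ l' with h' | ⟨l'', hl'', h'⟩
              · exact Or.inl h'
              · right; right
                exact ⟨l'', by omega, by omega, h'⟩
            · rw [if_pos rfl]
              rcases sbEdge_snd σ l' with h' | ⟨l'', hl'', h'⟩
              · exact Or.inr (Or.inl h')
              · right; right
                exact ⟨l'', by omega, by omega, h'⟩)
          have hd : |det2 (sbEdge σ (b :: l')).1 (sbEdge σ (b :: l')).2| = 1 := by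
            rw [det2_sbEdge]
            rcases hσ with rfl | rfl <;> norm_num
          have hpart : pmk (if b then (sbEdge σ l').2 else (sbEdge σ l').1)
              = pmk ((sbEdge σ (b :: l')).1 - (sbEdge σ (b :: l')).2) :=
            (partner_cons σ b l').symm
          have hmed : pmk (med σ (b :: l')) ∈ Xset n := memMed hσ (by simp; omega)
          rw [med] at hmed ⊢
          exact force hsimp hinj g hd hmu hmv hmed hmW hpart hfu hfv hfW
  refine ⟨g, ?_⟩
  intro y hy
  rcases hy with h | h | ⟨σ, hσ, l, hl, h⟩
  · rw [h]; exact hg1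
  · rw [h]; exact hg2
  · rw [h]; exact claim l.length σ hσ l le_rfl hl

end Farey
/-- Theorem 1.1 for the Farey complex: there is an increasing sequence of
finite rigid subsets of `ℙ¹(ℚ)`, each with pointwise stabilizer exactly `{±I}` in
`GL(2,ℤ)`, exhausting `ℙ¹(ℚ)`. -/
theorem farey_exhaustion_by_finite_rigid_sets :
    ∃ Xs : ℕ → Set P1Q,
      (∀ i : ℕ, Xs i ⊆ Xs (i + 1)) ∧
      (∀ i : ℕ, (Xs i).Finite) ∧
      (∀ i : ℕ, ∀ φ : P1Q → P1Q,
        FareySimplicial (Xs i) φ → FareyLocallyInjective (Xs i) φ →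
        ∃ g : GL (Fin 2) ℤ, ∀ y ∈ Xs i, φ y = fareyAct g y) ∧
      (∀ i : ℕ,
        {g : GL (Fin 2) ℤ | ∀ x ∈ Xs i, fareyAct g x = x} = {1, -1}) ∧
      (⋃ i : ℕ, Xs i) = Set.univ := by
  refine ⟨Farey.Xset, Farey.Xset_mono, Farey.Xset_finite, ?_, ?_, ?_⟩
  · intro i φ hs hl
    exact Farey.rigid i φ hs hl
  · intro i
    ext g
    simp only [Set.mem_setOf_eq, Set.mem_insert_iff, Set.mem_singleton_iff]
    constructor
    · intro h
      exact Farey.stab_triangle g (h _ (Farey.mem10 i)) (h _ (Farey.mem01 i))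
        (h _ (Farey.mem11 i))
    · rintro (rfl | rfl) x hx
      · exact Farey.fareyAct_one x
      · exact Farey.fareyAct_neg_one x
  · rw [Set.eq_univ_iff_forall]
    intro x
    rw [Set.mem_iUnion]
    rcases Farey.classify x with h | h | ⟨σ, hσ, l, h⟩
    · exact ⟨0, Or.inl h⟩
    · exact ⟨0, Or.inr (Or.inl h)⟩
    · exact ⟨l.length, Or.inr (Or.inr ⟨σ, hσ, l, le_rfl, h⟩)⟩
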